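/- (Single-shot sequential inference with forward initialization) Consider PC with F-ini ($v_{l,0} = u_{l,0}$, so $e_{l,0} = 0$ for $l < L$) and a single sequential inference sweep from the output layer downward, for a differentiable network. Then the change in hidden state after one sweep satisfies $v_{l,1} - v_{l,0} = -\left(\prod_{i=l+1}^{L} \gamma_i\right)\delta_l$ for all $l < L$, where $\delta_l = \partial u_L / \partial u_l$-type backpropagated signal defined recursively by $\delta_{L-1} = \phi'(v_{L-1,0}) \circ W_L^\top \delta_L$, $\delta_l = \phi'(v_{l,0}) \circ W_{l+1}^\top \delta_{l+1}$, and $\delta_L = -(y - W_L\phi(v_{L-1,0}))$ up to sign. -/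

import Mathlib

open Matrix Finset

/-- **Single-shot sequential inference with forward initialization.**
With F-ini (`v_{l,0} = u_{l,0}`, so `e_{l,0} = 0` for `l < L`) and one sequential inference
sweep from the output layer downward, the state change satisfies
`v_{l,1} - v_{l,0} = -(∏_{i=l+1}^{L} γ_i) δ_l` for all `l < L`.
Here `D k` is the backpropagated signal `δ_{L-k}` (with `δ_L = -(y - W_L φ(v_{L-1,0}))`,
`δ_l = φ'(v_{l,0}) ∘ W_{l+1}ᵀ δ_{l+1}`), and `E k` is the state change `v_{L-k,1} - v_{L-k,0}`
produced by the sequential PC update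
`v_{l,1} = v_{l,0} + γ_{l+1} φ'(v_{l,0}) ∘ W_{l+1}ᵀ e_{l+1,1}` with
`e_{L,1}` given by the gradient of the squared loss. -/
theorem pc_single_shot_sequential_inference (d L : ℕ) (hL : 1 ≤ L)
    (W : ℕ → Matrix (Fin d) (Fin d) ℝ) (γ : ℕ → ℝ)
    (φ dφ : ℝ → ℝ) (hφ : ∀ t : ℝ, HasDerivAt φ (dφ t) t)
    (v0 : ℕ → Fin d → ℝ) (y : Fin d → ℝ)
    (D : ℕ → Fin d → ℝ)
    (hD0 : D 0 = -(y - W L *ᵥ fun i => φ (v0 (L - 1) i)))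
    (hDs : ∀ k, D (k + 1) = fun i => dφ (v0 (L - (k + 1)) i) * (((W (L - k))ᵀ *ᵥ D k) i))
    (E : ℕ → Fin d → ℝ)
    (hE0 : E 0 = y - W L *ᵥ fun i => φ (v0 (L - 1) i))
    (hEs : ∀ k, E (k + 1) =
      γ (L - k) • fun i => dφ (v0 (L - (k + 1)) i) * (((W (L - k))ᵀ *ᵥ E k) i)) :
    ∀ l < L, E (L - l) = -(∏ i ∈ Finset.Icc (l + 1) L, γ i) • D (L - l) := by
  have key : ∀ k, k ≤ L → E k = -(∏ i ∈ Finset.Icc (L - k + 1) L, γ i) • D k := by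
    intro k
    induction k with
    | zero =>
      intro _
      have hemp : Finset.Icc (L - 0 + 1) L = ∅ :=
        Finset.Icc_eq_empty (by omega)
      rw [hemp, Finset.prod_empty, hE0, hD0]
      funext i
      simp
    | succ k ih =>
      intro hk
      have hkL : k ≤ L := Nat.le_of_succ_le hk
      have hc := ih hkL
      have h2 : L - (k + 1) + 1 = L - k := by omega
      have hprod : ∏ i ∈ Finset.Icc (L - k) L, γ i
          = γ (L - k) * ∏ i ∈ Finset.Icc (L - k + 1) L, γ i := by
        rw [Finset.Icc_add_one_left_eq_Ioc, ← Finset.Ioc_insert_left (Nat.sub_le L k),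
          Finset.prod_insert Finset.left_notMem_Ioc]
      rw [hEs k, hc, hDs k, h2, hprod]
      funext i
      simp [Matrix.mulVec_smul, Matrix.mulVec_neg, mul_comm, mul_left_comm]
      ring
  intro l hl
  have hk : L - l ≤ L := Nat.sub_le _ _
  have h := key (L - l) hk
  have h2 : L - (L - l) + 1 = l + 1 := by omega
  rwa [h2] at h
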